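/- Let Y be a dense subset of a homogeneous topological space X (i.e., for any two points of X there is a self-homeomorphism of X mapping one to the other). If Y is κ-Fréchet–Urysohn in the subspace topology, then X is κ-Fréchet–Urysohn. -/

import Mathlib

open Filter Topology

/-- A topological space is κ-Fréchet–Urysohn if for every open set `U` and every point
`x` in the closure of `U` there is a sequence in `U` converging to `x`. -/
def KappaFrechetUrysohn (X : Type*) [TopologicalSpace X] : Prop :=
  ∀ U : Set X, IsOpen U → ∀ x ∈ closure U,
    ∃ u : ℕ → X, (∀ n, u n ∈ U) ∧ Tendsto u atTop (𝓝 x)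

theorem stmt2 {X : Type*} [TopologicalSpace X]
    (hhom : ∀ x y : X, ∃ h : X ≃ₜ X, h x = y)
    (Y : Set X) (hY : Dense Y) (h : KappaFrechetUrysohn ↥Y) :
    KappaFrechetUrysohn X := by
  intro U hU x hx
  -- Y is nonempty since X is (it contains x) and Y is dense
  obtain ⟨y0, hy0⟩ : Y.Nonempty := hY.nonempty_iff.mpr ⟨x⟩
  obtain ⟨e, he⟩ := hhom x y0
  -- W = e '' U is open and y0 ∈ closure W
  set W : Set X := e '' U with hW
  have hWopen : IsOpen W := e.isOpenMap U hU
  have hy0W : y0 ∈ closure W := by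
    rw [← he, hW, ← e.image_closure]
    exact Set.mem_image_of_mem _ hx
  -- y0 ∈ closure (W ∩ Y)
  have hy0WY : y0 ∈ closure (W ∩ Y) := by
    have h1 : closure W ⊆ closure (W ∩ Y) := by
      rw [← closure_closure (s := W ∩ Y)]
      exact closure_mono (hY.open_subset_closure_inter hWopen)
    exact h1 hy0W
  -- V := preimage of W in Y
  set V : Set Y := Subtype.val ⁻¹' W with hV
  have hVopen : IsOpen V := hWopen.preimage continuous_subtype_val
  have hmem : (⟨y0, hy0⟩ : Y) ∈ closure V := by
    rw [closure_subtype]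
    have : Subtype.val '' V = W ∩ Y := by
      ext z
      simp [hV, Set.mem_image, Set.mem_inter_iff, And.comm]
    rw [this]
    exact hy0WY
  obtain ⟨u, huV, hconv⟩ := h V hVopen ⟨y0, hy0⟩ hmem
  refine ⟨fun n => e.symm (u n), fun n => ?_, ?_⟩
  · have : (u n : X) ∈ e '' U := huV n
    obtain ⟨z, hz, hze⟩ := this
    simpa [← hze] using hz
  · have h1 : Tendsto (fun n => (u n : X)) atTop (𝓝 y0) :=
      (continuous_subtype_val.tendsto _).comp hconv
    have h2 := (e.symm.continuous.tendsto y0).comp h1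
    simpa [← he, Function.comp_def] using h2
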